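/- Let Γ ⊆ Φ and let Ψ be the smallest root subsystem of Φ containing Γ. Let 𝒵 be a root function with support Ψ such that 0 ∈ Z_α for all α ∈ Γ. Then for every α ∈ Ψ, Z_α is a subgroup of ℤ, i.e. Z_α = n_α·ℤ for some n_α ∈ ℕ. -/

import Mathlib

open Module Submodule

variable {V : Type*}

/-- For `A, B ⊆ ℤ` and `c : ℤ`, the set `A - c·B = {a - c*b | a ∈ A, b ∈ B}`. -/
def zdiff (A : Set ℤ) (c : ℤ) (B : Set ℤ) : Set ℤ := {z | ∃ a ∈ A, ∃ b ∈ B, z = a - c * b}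

/-- The set `n·ℤ` of integer multiples of `n`. -/
def zmul (n : ℤ) : Set ℤ := {z | ∃ k : ℤ, z = n * k}

/-- Minkowski sum of two sets of integers. -/
def msum (A B : Set ℤ) : Set ℤ := {z | ∃ a ∈ A, ∃ b ∈ B, z = a + b}

section
variable [AddCommGroup V] [Module ℝ V]

/-- `Ψ` is a root subsystem of `Φ` (with coroot assignment `cv`):
`Ψ ⊆ Φ` and `s_α(β) = β - ⟨β,α∨⟩•α ∈ Ψ` for all `α, β ∈ Ψ`. -/
def IsRootSubsystem (Φ : Set V) (cv : V → Module.Dual ℝ V) (Ψ : Set V) : Prop :=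
  Ψ ⊆ Φ ∧ ∀ α ∈ Ψ, ∀ β ∈ Ψ, β - cv α β • α ∈ Ψ

/-- `Z : V → Set ℤ` is a root function for `Φ`:
`Z β - ⟨β,α∨⟩·Z α ⊆ Z (s_α β)` for all `α, β ∈ Φ`.
Here `pairInt β α` is the integer `⟨β, α∨⟩`. -/
def IsRootFunction (Φ : Set V) (cv : V → Module.Dual ℝ V) (pairInt : V → V → ℤ)
    (Z : V → Set ℤ) : Prop :=
  ∀ α ∈ Φ, ∀ β ∈ Φ, zdiff (Z β) (pairInt β α) (Z α) ⊆ Z (β - cv α β • α)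

/-- `S` is a root subsystem of the loop extension `Φ × ℤ`:
`S ⊆ Φ × ℤ` and `S` is closed under the reflections
`ŝ_(α,m) (β,n) = (s_α β, n - m·⟨β,α∨⟩)`. -/
def IsLoopSubsystem (Φ : Set V) (cv : V → Module.Dual ℝ V) (pairInt : V → V → ℤ)
    (S : Set (V × ℤ)) : Prop :=
  (∀ p ∈ S, p.1 ∈ Φ) ∧
  ∀ p ∈ S, ∀ q ∈ S, (q.1 - cv p.1 q.1 • p.1, q.2 - p.2 * pairInt q.1 p.1) ∈ S

/-- The group `W_Ψ` of linear automorphisms of `V` generated by the reflections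
`s_α : v ↦ v - ⟨v,α∨⟩•α` for `α ∈ Ψ`. -/
def WGroup (cv : V → Module.Dual ℝ V) (Ψ : Set V) (h2 : ∀ α ∈ Ψ, cv α α = 2) :
    Subgroup (V ≃ₗ[ℝ] V) :=
  Subgroup.closure {w | ∃ α, ∃ hα : α ∈ Ψ, w = Module.reflection (h2 α hα)}

/-- `X(α) = {f(α) | f ∈ X}` for a set `X` of coweights (elements of `Ω(Ψ) = Hom_ℤ(ℤΨ, ℤ)`,
where `ℤΨ = span ℤ Γ`). -/
def Xval (Γ : Set V) (X : Set (span ℤ (Γ : Set V) →ₗ[ℤ] ℤ)) {α : V}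
    (h : α ∈ span ℤ Γ) : Set ℤ :=
  {z | ∃ f ∈ X, f ⟨α, h⟩ = z}

/-- `X` is an admissible subgroup of the coweight lattice `Ω(Ψ) = Hom_ℤ(ℤΨ, ℤ)`
(`ℤΨ = span ℤ Γ`): there is `N : Ψ → ℕ` with `n_β ∣ ⟨β,α∨⟩·n_α` for all `α, β ∈ Ψ` and
`n_{w(α)} = n_α` for all `α ∈ Ψ`, `w ∈ W_Ψ`, such that
`X = {f ∈ Ω(Ψ) | f(α) ∈ n_α·ℤ for all α ∈ Ψ}`. -/
def IsAdmissibleSubgroup (cv : V → Module.Dual ℝ V) (pairInt : V → V → ℤ)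
    (Γ Ψ : Set V) (h2Ψ : ∀ α ∈ Ψ, cv α α = 2) (hspan : ∀ α ∈ Ψ, α ∈ span ℤ Γ)
    (X : AddSubgroup (span ℤ (Γ : Set V) →ₗ[ℤ] ℤ)) : Prop :=
  ∃ N : V → ℕ,
    (∀ α ∈ Ψ, ∀ β ∈ Ψ, (N β : ℤ) ∣ pairInt β α * N α) ∧
    (∀ α ∈ Ψ, ∀ w ∈ WGroup cv Ψ h2Ψ, N (w α) = N α) ∧
    ((X : Set (span ℤ (Γ : Set V) →ₗ[ℤ] ℤ)) =
      {f | ∀ α, ∀ hα : α ∈ Ψ, (N α : ℤ) ∣ f ⟨α, hspan α hα⟩})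

end

variable [AddCommGroup V] [Module ℝ V]

lemma aux_zmul_eq_dvd (n : ℤ) : zmul n = {z | n ∣ z} := by
  ext z; exact ⟨fun ⟨k, hk⟩ => ⟨k, hk⟩, fun ⟨k, hk⟩ => ⟨k, hk⟩⟩

lemma aux_lemC (A : Set ℤ) (h0 : (0:ℤ) ∈ A)
    (hcl : ∀ a ∈ A, ∀ b ∈ A, a - 2*b ∈ A) : ∃ n : ℕ, A = zmul n := by
  have hAcl : A ⊆ (AddSubgroup.closure A : Set ℤ) := AddSubgroup.subset_closure
  have key : ∀ g ∈ AddSubgroup.closure A, ∀ a ∈ A, a + 2*g ∈ A ∧ a - 2*g ∈ A := by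
    intro g hg
    induction hg using AddSubgroup.closure_induction with
    | mem x hx =>
        intro a ha
        have h1 : a - 2*x ∈ A := hcl a ha x hx
        have hnx : -x ∈ A := by have := hcl x hx x hx; convert this using 1; ring
        have h2 : a + 2*x ∈ A := by have := hcl a ha (-x) hnx; convert this using 1; ring
        exact ⟨h2, h1⟩
    | zero => intro a ha; refine ⟨?_, ?_⟩ <;> simpa using ha
    | add x y hx hy ihx ihy =>
        intro a ha
        constructor
        · have := (ihy (a + 2*x) ((ihx a ha).1)).1; convert this using 1; ring
        · have := (ihy (a - 2*x) ((ihx a ha).2)).2; convert this using 1; ring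
    | neg x hx ihx =>
        intro a ha
        exact ⟨by have := (ihx a ha).2; convert this using 1; ring,
               by have := (ihx a ha).1; convert this using 1; ring⟩
  obtain ⟨d, hd⟩ := Int.subgroup_cyclic (AddSubgroup.closure A)
  have hmem : ∀ x : ℤ, x ∈ AddSubgroup.closure A ↔ d ∣ x := by
    intro x
    rw [hd, AddSubgroup.mem_closure_singleton]
    constructor
    · rintro ⟨n, rfl⟩; exact ⟨n, by rw [smul_eq_mul]; ring⟩
    · rintro ⟨n, rfl⟩; exact ⟨n, by rw [smul_eq_mul]; ring⟩
  by_cases hd0 : d = 0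
  · refine ⟨0, ?_⟩
    subst hd0
    ext z
    simp only [aux_zmul_eq_dvd, Set.mem_setOf_eq, zero_dvd_iff, Nat.cast_zero]
    constructor
    · intro hz; have := (hmem z).mp (hAcl hz); simpa using this
    · rintro rfl; exact h0
  by_cases hex : ∃ a ∈ A, ¬ ((2*d) ∣ a)
  · obtain ⟨a, ha, hnd⟩ := hex
    obtain ⟨k, hk⟩ := (hmem a).mp (hAcl ha)
    have hkodd : Odd k := by
      rcases Int.even_or_odd k with ⟨j, hj⟩ | h
      · exact absurd ⟨j, by rw [hk, hj]; ring⟩ hnd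
      · exact h
    refine ⟨d.natAbs, ?_⟩
    ext z
    rw [aux_zmul_eq_dvd]
    simp only [Set.mem_setOf_eq, Int.natAbs_dvd]
    constructor
    · intro hz; exact (hmem z).mp (hAcl hz)
    · rintro ⟨m, rfl⟩
      rcases Int.even_or_odd m with ⟨j, hj⟩ | ⟨j, hj⟩
      · have hdj : d * j ∈ AddSubgroup.closure A := (hmem _).mpr ⟨j, rfl⟩
        have := (key _ hdj 0 h0).1
        convert this using 1; rw [hj]; ring
      · obtain ⟨j2, hj2⟩ := hkodd
        have hdj : d * (j - j2) ∈ AddSubgroup.closure A := (hmem _).mpr ⟨j - j2, rfl⟩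
        have := (key _ hdj a ha).1
        convert this using 1; rw [hj, hk, hj2]; ring
  · push_neg at hex
    exfalso
    have hle : AddSubgroup.closure A ≤ AddSubgroup.zmultiples (2*d) := by
      rw [AddSubgroup.closure_le]
      intro x hx
      obtain ⟨c, hc⟩ := hex x hx
      exact ⟨c, show c • (2*d) = x by rw [smul_eq_mul, hc]; ring⟩
    have hdmem : d ∈ AddSubgroup.closure A := (hmem d).mpr ⟨1, by ring⟩
    obtain ⟨c, hc⟩ := hle hdmem
    simp only [smul_eq_mul] at hc
    have : d * (c * 2 - 1) = 0 := by linarith [hc]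
    rcases mul_eq_zero.mp this with h | h
    · exact hd0 h
    · omega

theorem stmt11
    (Φ : Set V) (cv : V → Module.Dual ℝ V) (pairInt : V → V → ℤ)
    (hne : ∀ α ∈ Φ, α ≠ 0)
    (h2 : ∀ α ∈ Φ, cv α α = 2)
    (hpair : ∀ α ∈ Φ, ∀ β ∈ Φ, (pairInt β α : ℝ) = cv α β)
    (hrefl : ∀ α ∈ Φ, (fun β => β - cv α β • α) '' Φ = Φ)
    (Γ Ψ : Set V) (hΓΦ : Γ ⊆ Φ)
    (hΨ : IsRootSubsystem Φ cv Ψ) (hΓΨ : Γ ⊆ Ψ)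
    (hmin : ∀ Ψ', IsRootSubsystem Φ cv Ψ' → Γ ⊆ Ψ' → Ψ ⊆ Ψ')
    (Z : V → Set ℤ) (hZ : IsRootFunction Φ cv pairInt Z)
    (hsupp : {α ∈ Φ | Z α ≠ ∅} = Ψ)
    (h0 : ∀ α ∈ Γ, (0 : ℤ) ∈ Z α) :
    ∀ α ∈ Ψ, ∃ n : ℕ, Z α = zmul n := by
  have hΨΦ : Ψ ⊆ Φ := hΨ.1
  have h0all : ∀ α ∈ Ψ, (0:ℤ) ∈ Z α := by
    have hsub : IsRootSubsystem Φ cv {α | α ∈ Φ ∧ (0:ℤ) ∈ Z α} := by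
      refine ⟨fun x hx => hx.1, ?_⟩
      intro α hα β hβ
      refine ⟨?_, ?_⟩
      · rw [← hrefl α hα.1]; exact ⟨β, hβ.1, rfl⟩
      · exact hZ α hα.1 β hβ.1 ⟨0, hβ.2, 0, hα.2, by ring⟩
    intro α hα
    exact (hmin _ hsub (fun γ hγ => ⟨hΓΦ hγ, h0 γ hγ⟩) hα).2
  have hp2 : ∀ α ∈ Φ, pairInt α α = 2 := by
    intro α hα
    have h := hpair α hα α hα
    rw [h2 α hα] at h
    exact_mod_cast h
  have hreflself : ∀ α ∈ Φ, α - cv α α • α = -α := by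
    intro α hα
    rw [h2 α hα, two_smul]
    abel
  have hnegΨ : ∀ α ∈ Ψ, -α ∈ Ψ := by
    intro α hα
    have h := hΨ.2 α hα α hα
    rwa [hreflself α (hΨΦ hα)] at h
  have hstep : ∀ α ∈ Φ, ∀ a ∈ Z α, ∀ b ∈ Z α, a - 2*b ∈ Z (-α) := by
    intro α hα a ha b hb
    have h := hZ α hα α hα ⟨a, ha, b, hb, by rw [hp2 α hα]⟩
    rwa [hreflself α hα] at h
  have hZneg : ∀ α ∈ Ψ, Z (-α) ⊆ Z α := by
    intro α hα x hx
    have hn : -α ∈ Ψ := hnegΨ α hα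
    have h := hstep (-α) (hΨΦ hn) x hx 0 (h0all _ hn)
    rw [neg_neg] at h
    simpa using h
  intro α hα
  apply aux_lemC (Z α) (h0all α hα)
  intro a ha b hb
  exact hZneg α hα (hstep α (hΨΦ hα) a ha b hb)
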